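/- arXiv:1705.00610 — 3 statements merged into one kernel-verified Lean document; each statement's English description precedes it below -/
import Mathlib

section
/- Identify ℝ^{3,1} with the real subspace V := {q ∈ H^C : q = -hat(conj(q))} = {i·x1·1 + x2·I + x3·J + x4·K : xi ∈ ℝ}. Then for every p ∈ Spin(3,1) and every q ∈ V, the element p·q·(hat(p))⁻¹ again lies in V and satisfies H(p·q·(hat(p))⁻¹, p·q·(hat(p))⁻¹) = H(q,q). In particular, q ↦ p·q·(hat(p))⁻¹ defines a Minkowski isometry of V, since for q = i·x1 + x2I + x3J + x4K one has H(q,q) = -x1² + x2² + x3² + x4². -/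
open Quaternion

noncomputable section

/-- The "hat" involution on complexified quaternions: complex-conjugate each coefficient. -/
def hatQ (q : ℍ[ℂ]) : ℍ[ℂ] :=
  ⟨(starRingEnd ℂ) q.re, (starRingEnd ℂ) q.imI, (starRingEnd ℂ) q.imJ, (starRingEnd ℂ) q.imK⟩

/-- Quaternionic conjugation: negate the I, J, K components. -/
def conjQ (q : ℍ[ℂ]) : ℍ[ℂ] := ⟨q.re, -q.imI, -q.imJ, -q.imK⟩

/-- The complex bilinear form H(q,q') = q1q1' + q2q2' + q3q3' + q4q4'. -/
def Hform (p q : ℍ[ℂ]) : ℂ := p.re * q.re + p.imI * q.imI + p.imJ * q.imJ + p.imK * q.imK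

def Iq : ℍ[ℂ] := ⟨0,1,0,0⟩
def Jq : ℍ[ℂ] := ⟨0,0,1,0⟩
def Kq : ℍ[ℂ] := ⟨0,0,0,1⟩

lemma hatQ_re (q : ℍ[ℂ]) : (hatQ q).re = (starRingEnd ℂ) q.re := rfl
lemma hatQ_imI (q : ℍ[ℂ]) : (hatQ q).imI = (starRingEnd ℂ) q.imI := rfl
lemma hatQ_imJ (q : ℍ[ℂ]) : (hatQ q).imJ = (starRingEnd ℂ) q.imJ := rfl
lemma hatQ_imK (q : ℍ[ℂ]) : (hatQ q).imK = (starRingEnd ℂ) q.imK := rfl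
lemma conjQ_re (q : ℍ[ℂ]) : (conjQ q).re = q.re := rfl
lemma conjQ_imI (q : ℍ[ℂ]) : (conjQ q).imI = -q.imI := rfl
lemma conjQ_imJ (q : ℍ[ℂ]) : (conjQ q).imJ = -q.imJ := rfl
lemma conjQ_imK (q : ℍ[ℂ]) : (conjQ q).imK = -q.imK := rfl

lemma Hform_mul (x y : ℍ[ℂ]) : Hform (x * y) (x * y) = Hform x x * Hform y y := by
  simp only [Hform, Quaternion.re_mul, Quaternion.imI_mul, Quaternion.imJ_mul,
    Quaternion.imK_mul]
  ring

theorem spin_action_preserves_minkowski (p : ℍ[ℂ]) (hp : Hform p p = 1)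
    (q : ℍ[ℂ]) (hq : q = -hatQ (conjQ q)) :
    (p * q * conjQ (hatQ p) = -hatQ (conjQ (p * q * conjQ (hatQ p)))) ∧
    Hform (p * q * conjQ (hatQ p)) (p * q * conjQ (hatQ p)) = Hform q q ∧
    (∀ x1 x2 x3 x4 : ℝ,
      Hform (⟨(x1:ℂ) * Complex.I, (x2:ℂ), (x3:ℂ), (x4:ℂ)⟩ : ℍ[ℂ])
            (⟨(x1:ℂ) * Complex.I, (x2:ℂ), (x3:ℂ), (x4:ℂ)⟩ : ℍ[ℂ])
        = -(x1:ℂ)^2 + (x2:ℂ)^2 + (x3:ℂ)^2 + (x4:ℂ)^2) := by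
  have hq1 : (starRingEnd ℂ) q.re = -q.re := by
    have := congrArg QuaternionAlgebra.re hq
    simp [hatQ, conjQ] at this
    change q.re = -((starRingEnd ℂ) q.re) at this
    simpa using congrArg (starRingEnd ℂ) this
  have hq2 : (starRingEnd ℂ) q.imI = q.imI := by
    have := congrArg QuaternionAlgebra.imI hq
    simp [hatQ, conjQ] at this
    change q.imI = -(-(starRingEnd ℂ) q.imI) at this
    simpa using this.symm
  have hq3 : (starRingEnd ℂ) q.imJ = q.imJ := by
    have := congrArg QuaternionAlgebra.imJ hq
    simp [hatQ, conjQ] at this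
    change q.imJ = -(-(starRingEnd ℂ) q.imJ) at this
    simpa using this.symm
  have hq4 : (starRingEnd ℂ) q.imK = q.imK := by
    have := congrArg QuaternionAlgebra.imK hq
    simp [hatQ, conjQ] at this
    change q.imK = -(-(starRingEnd ℂ) q.imK) at this
    simpa using this.symm
  refine ⟨?_, ?_, ?_⟩
  · ext <;>
      simp only [hatQ_re, hatQ_imI, hatQ_imJ, hatQ_imK, conjQ_re, conjQ_imI, conjQ_imJ, conjQ_imK,
        Quaternion.re_mul, Quaternion.imI_mul, Quaternion.imJ_mul,
        Quaternion.imK_mul, Quaternion.re_neg, Quaternion.imI_neg, Quaternion.imJ_neg,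
        Quaternion.imK_neg, map_add, map_sub, map_mul, map_neg, RingHom.id_apply,
        Complex.conj_conj, hq1, hq2, hq3, hq4] <;> ring
  · rw [Hform_mul, Hform_mul, hp]
    have hr : Hform (conjQ (hatQ p)) (conjQ (hatQ p)) = 1 := by
      have : Hform (conjQ (hatQ p)) (conjQ (hatQ p)) = (starRingEnd ℂ) (Hform p p) := by
        simp [Hform, conjQ, hatQ, map_add, map_mul]
      rw [this, hp, map_one]
    rw [hr]; ring
  · intro x1 x2 x3 x4
    simp [Hform]
    ring_nf
    simp [Complex.I_sq]
    try ring
end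
end

section
/- For every g ∈ Spin(3,1), the element p(g) := i·g⁻¹·I·g is purely imaginary, i.e. lies in ℂ·I ⊕ ℂ·J ⊕ ℂ·K (in fact in ℂ·iI ⊕ ℂ·J ⊕ ℂ·iK ∩ imaginaries), and satisfies H(p(g), p(g)) = -1. Hence p maps Spin(3,1) into the quadric Q = {ξ ∈ Im H^C : H(ξ,ξ) = -1}. -/
open Quaternion

noncomputable section

theorem gauss_map_lands_in_quadric (g : ℍ[ℂ]) (hg : Hform g g = 1) :
    (Complex.I • (conjQ g * Iq * g)).re = 0 ∧
    Hform (Complex.I • (conjQ g * Iq * g)) (Complex.I • (conjQ g * Iq * g)) = -1 := by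
  simp only [Hform, Quaternion.re_mul, Quaternion.imI_mul, Quaternion.imJ_mul,
    Quaternion.imK_mul, Quaternion.re_smul, Quaternion.imI_smul, Quaternion.imJ_smul,
    Quaternion.imK_smul, smul_eq_mul] at hg ⊢
  obtain ⟨a, b, c, d⟩ := g
  simp only [conjQ, Iq] at hg ⊢
  constructor
  · ring_nf
  · linear_combination (Complex.I ^ 2 * (a * a + b * b + c * c + d * d + 1)) * hg +
      (a ^ 2 + b ^ 2 + c ^ 2 + d ^ 2) ^ 2 * Complex.I_sq +
      (1 - (a ^ 2 + b ^ 2 + c ^ 2 + d ^ 2) ^ 2) * Complex.I_sq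
end
end

section
/- For every g ∈ Spin(3,1), the four elements g, iI·g, K·g, iJ·g of H^C are pairwise H-orthogonal, and their H-norms are H(g,g) = 1, H(iIg, iIg) = -1, H(Kg, Kg) = 1, H(iJg, iJg) = -1. -/
open Quaternion

noncomputable section

theorem H_orthonormal_frame (g : ℍ[ℂ]) (hg : Hform g g = 1) :
    Hform g (Complex.I • Iq * g) = 0 ∧
    Hform g (Kq * g) = 0 ∧
    Hform g (Complex.I • Jq * g) = 0 ∧
    Hform (Complex.I • Iq * g) (Kq * g) = 0 ∧
    Hform (Complex.I • Iq * g) (Complex.I • Jq * g) = 0 ∧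
    Hform (Kq * g) (Complex.I • Jq * g) = 0 ∧
    Hform g g = 1 ∧
    Hform (Complex.I • Iq * g) (Complex.I • Iq * g) = -1 ∧
    Hform (Kq * g) (Kq * g) = 1 ∧
    Hform (Complex.I • Jq * g) (Complex.I • Jq * g) = -1 := by
  have hIq : Complex.I • (⟨0,1,0,0⟩ : ℍ[ℂ]) = (⟨0, Complex.I, 0, 0⟩ : ℍ[ℂ]) := by
    ext <;> simp [Quaternion.re_smul, Quaternion.imI_smul, Quaternion.imJ_smul,
      Quaternion.imK_smul]
  have hJq : Complex.I • (⟨0,0,1,0⟩ : ℍ[ℂ]) = (⟨0, 0, Complex.I, 0⟩ : ℍ[ℂ]) := by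
    ext <;> simp [Quaternion.re_smul, Quaternion.imI_smul, Quaternion.imJ_smul,
      Quaternion.imK_smul]
  simp only [Hform] at hg
  refine ⟨?_, ?_, ?_, ?_, ?_, ?_, ?_, ?_, ?_, ?_⟩ <;>
  · simp only [Hform, Quaternion.re_mul, Quaternion.imI_mul, Quaternion.imJ_mul,
      Quaternion.imK_mul, Quaternion.re_smul, Quaternion.imI_smul, Quaternion.imJ_smul,
      Quaternion.imK_smul, smul_eq_mul]
    simp -failIfUnchanged only [Iq, Jq, Kq, mul_zero, zero_mul, mul_one, one_mul, sub_zero, zero_sub, add_zero,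
      zero_add]
    first
      | ring1
      | linear_combination hg
      | linear_combination Complex.I ^ 2 * hg + Complex.I_sq
end
end
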